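/- For every permutation σ ∈ S_n and every i ∈ {1,…,n}, the R-matrix Dunkl operators satisfy the equivariance property ŝ_σ ∘ y_i(λ) = y_{σ(i)}(σ·λ) ∘ ŝ_σ, where y_i(λ) denotes the Dunkl operator with spectral parameter λ and (σ·λ)_j = λ_{σ^{-1}(j)}. No properties (i)–(iii) of R are required for this identity. -/

import Mathlib

open Finset

noncomputable section

/-- Matrices modelling `End(ℂ^d ⊗ ℂ^d)`. -/
abbrev M2 (d : ℕ) := Matrix (Fin d × Fin d) (Fin d × Fin d) ℂ

/-- The spin space `U = (ℂ^d)^{⊗ n}`, modelled as functions `(Fin n → Fin d) → ℂ`. -/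
abbrev Uspin (n d : ℕ) := (Fin n → Fin d) → ℂ

/-- Tensor-leg placement `T_{ij}` of `T ∈ End(ℂ^d ⊗ ℂ^d)` acting in the `i`-th and
`j`-th tensor factors of `U = (ℂ^d)^{⊗ n}`. -/
def leg {n d : ℕ} (T : M2 d) (i j : Fin n) :
    Matrix (Fin n → Fin d) (Fin n → Fin d) ℂ :=
  fun a b => T (a i, a j) (b i, b j) *
    ∏ k ∈ univ.filter (fun k => k ≠ i ∧ k ≠ j), (if a k = b k then (1 : ℂ) else 0)

/-- The operator `P_σ` on `U` permuting the tensor factors: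
`P_σ (u_1 ⊗ … ⊗ u_n) = u_{σ⁻¹(1)} ⊗ … ⊗ u_{σ⁻¹(n)}`; on the function model
it is `(P_σ v)(a) = v(a ∘ σ)`. -/
def permU {n d : ℕ} (σ : Equiv.Perm (Fin n)) : Uspin n d → Uspin n d :=
  fun v a => v (a ∘ σ)

/-- The operator `ŝ_σ`: `(ŝ_σ f)(x) = P_σ f(σ⁻¹·x)`, where `(σ·x)_j = x_{σ⁻¹(j)}`
(so `σ⁻¹·x = x ∘ σ`). -/
def shatP {n d : ℕ} (σ : Equiv.Perm (Fin n)) (f : (Fin n → ℂ) → Uspin n d) :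
    (Fin n → ℂ) → Uspin n d :=
  fun x => permU σ (f (x ∘ σ))

/-- The `R`-matrix Dunkl operator with spectral parameter `λ`:
`y_i(λ) = ℏ ∂/∂x_i − g Σ_{j ≠ i} R_{ij}(x_i−x_j, λ_i−λ_j) ∘ ŝ_{ij}`,
where `ŝ_{ij} = ŝ_{s_{ij}}` for the transposition `s_{ij}`. -/
def dunkl {n d : ℕ} (R : ℂ → ℂ → M2 d) (hbar g : ℂ) (lam : Fin n → ℂ) (i : Fin n)
    (f : (Fin n → ℂ) → Uspin n d) : (Fin n → ℂ) → Uspin n d :=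
  fun x => hbar • fderiv ℂ f x (Pi.single i 1) -
    g • ∑ j ∈ univ.filter (fun j => j ≠ i),
      (leg (R (x i - x j) (lam i - lam j)) i j).mulVec
        (shatP (Equiv.swap i j) f x)


-- Auxiliary lemmas ------------------------------------------------------

lemma swap_comp_perm {n : ℕ} (σ : Equiv.Perm (Fin n)) (i j : Fin n) :
    (Equiv.swap (σ i) (σ j)) * σ = σ * Equiv.swap i j := by
  ext k
  simp [Equiv.Perm.mul_apply, Equiv.swap_apply_def, apply_ite σ,
    EmbeddingLike.apply_eq_iff_eq]

lemma single_comp_perm {n : ℕ} (σ : Equiv.Perm (Fin n)) (i : Fin n) :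
    (Pi.single (σ i) (1:ℂ)) ∘ ⇑σ = Pi.single i 1 := by
  funext k
  by_cases h : k = i
  · subst h; simp
  · simp only [Function.comp_apply,
      Pi.single_eq_of_ne (σ.injective.ne h), Pi.single_eq_of_ne h]

lemma permU_comp {n d : ℕ} (τ σ : Equiv.Perm (Fin n)) (v : Uspin n d) :
    permU τ (permU σ v) = permU (τ * σ) v := by
  funext a
  simp [permU, Function.comp_assoc]

lemma leg_perm_entry {n d : ℕ} (T : M2 d) (σ : Equiv.Perm (Fin n)) (i j : Fin n)
    (a b : Fin n → Fin d) :
    leg T (σ i) (σ j) a (b ∘ ⇑σ.symm) = leg T i j (a ∘ ⇑σ) b := by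
  unfold leg
  congr 1
  · simp
  · rw [Finset.prod_filter, Finset.prod_filter, ← Equiv.prod_comp σ]
    refine Finset.prod_congr rfl fun m _ => ?_
    simp [EmbeddingLike.apply_eq_iff_eq]

lemma permU_mulVec {n d : ℕ} (T : M2 d) (σ : Equiv.Perm (Fin n)) (i j : Fin n)
    (w : Uspin n d) :
    permU σ ((leg T i j).mulVec w) = (leg T (σ i) (σ j)).mulVec (permU σ w) := by
  funext a
  show (leg T i j).mulVec w (a ∘ ⇑σ) = _
  simp only [Matrix.mulVec, dotProduct]
  rw [← Equiv.sum_comp (Equiv.arrowCongr σ (Equiv.refl (Fin d)))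
    (fun b => leg T (σ i) (σ j) a b * permU σ w b)]
  refine Finset.sum_congr rfl fun b _ => ?_
  have h1 : (Equiv.arrowCongr σ (Equiv.refl (Fin d))) b = b ∘ ⇑σ.symm := rfl
  rw [h1, leg_perm_entry]
  have : permU σ w (b ∘ ⇑σ.symm) = w ((b ∘ ⇑σ.symm) ∘ ⇑σ) := rfl
  rw [this]
  congr 2
  funext k
  simp

lemma shatP_swap_comp {n d : ℕ} (σ : Equiv.Perm (Fin n)) (i j : Fin n)
    (f : (Fin n → ℂ) → Uspin n d) (x : Fin n → ℂ) :
    shatP (Equiv.swap (σ i) (σ j)) (shatP σ f) x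
      = permU σ (shatP (Equiv.swap i j) f (x ∘ ⇑σ)) := by
  unfold shatP
  have hc : (x ∘ ⇑(Equiv.swap (σ i) (σ j))) ∘ ⇑σ = (x ∘ ⇑σ) ∘ ⇑(Equiv.swap i j) := by
    funext k
    have := congrArg (fun p : Equiv.Perm (Fin n) => p k) (swap_comp_perm σ i j)
    simpa [Equiv.Perm.mul_apply, Function.comp] using congrArg x this
  rw [permU_comp, permU_comp, swap_comp_perm, hc]

/-- The continuous linear map `x ↦ x ∘ σ` on `Fin n → ℂ`. -/
def compPermCLM (n : ℕ) (σ : Equiv.Perm (Fin n)) : (Fin n → ℂ) →L[ℂ] (Fin n → ℂ) :=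
  LinearMap.toContinuousLinearMap (LinearMap.funLeft ℂ ℂ σ)

/-- `permU σ` as a continuous linear map. -/
def permUCLM (n d : ℕ) (σ : Equiv.Perm (Fin n)) : Uspin n d →L[ℂ] Uspin n d :=
  LinearMap.toContinuousLinearMap (LinearMap.funLeft ℂ ℂ (fun a => a ∘ σ))

lemma fderiv_shatP {n d : ℕ} (σ : Equiv.Perm (Fin n)) (f : (Fin n → ℂ) → Uspin n d)
    (x : Fin n → ℂ) (hf : DifferentiableAt ℂ f (x ∘ ⇑σ)) (i : Fin n) :
    fderiv ℂ (shatP σ f) x (Pi.single (σ i) 1)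
      = permU σ (fderiv ℂ f (x ∘ ⇑σ) (Pi.single i 1)) := by
  have h2 : HasFDerivAt (⇑(compPermCLM n σ)) (compPermCLM n σ) x :=
    (compPermCLM n σ).hasFDerivAt
  have h1 : HasFDerivAt f (fderiv ℂ f (x ∘ ⇑σ)) (compPermCLM n σ x) := hf.hasFDerivAt
  have h3 := ((permUCLM n d σ).hasFDerivAt.comp x (h1.comp x h2))
  have h4 : shatP σ f = (⇑(permUCLM n d σ)) ∘ f ∘ (⇑(compPermCLM n σ)) := rfl
  rw [h4, h3.fderiv]
  show permU σ (fderiv ℂ f (x ∘ ⇑σ) ((Pi.single (σ i) 1) ∘ ⇑σ)) = _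
  rw [single_comp_perm]

/-- equivariance of the `R`-matrix Dunkl operators:
`ŝ_σ ∘ y_i(λ) = y_{σ(i)}(σ·λ) ∘ ŝ_σ`, where `(σ·λ)_j = λ_{σ⁻¹(j)}`.
No properties (i)–(iii) of `R` are required. -/
theorem dunkl_equivariance
    (n d : ℕ) (hn : 2 ≤ n) (hd : 1 ≤ d)
    (D : Set ℂ) (hDopen : IsOpen D) (hDsym : ∀ z ∈ D, -z ∈ D)
    (R : ℂ → ℂ → M2 d)
    (hRhol : ∀ a b, DifferentiableOn ℂ (fun p : ℂ × ℂ => R p.1 p.2 a b) (D ×ˢ D))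
    (hbar g : ℂ) (lam : Fin n → ℂ) (hlam : ∀ i j : Fin n, i ≠ j → lam i - lam j ∈ D)
    (Ω : Set (Fin n → ℂ)) (hΩopen : IsOpen Ω) (hΩne : Ω.Nonempty)
    (hΩperm : ∀ σ : Equiv.Perm (Fin n), ∀ x ∈ Ω, (x ∘ σ) ∈ Ω)
    (hΩD : ∀ x ∈ Ω, ∀ i j : Fin n, i ≠ j → x i - x j ∈ D)
    (σ : Equiv.Perm (Fin n)) (i : Fin n)
    (f : (Fin n → ℂ) → Uspin n d) (hf : DifferentiableOn ℂ f Ω) :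
    ∀ x ∈ Ω,
      shatP σ (dunkl R hbar g lam i f) x =
      dunkl R hbar g (lam ∘ ⇑σ⁻¹) (σ i) (shatP σ f) x := by
  intro x hx
  have hxσ : (x ∘ ⇑σ) ∈ Ω := hΩperm σ x hx
  have hfd : DifferentiableAt ℂ f (x ∘ ⇑σ) :=
    hf.differentiableAt (hΩopen.mem_nhds hxσ)
  show permU σ (dunkl R hbar g lam i f (x ∘ ⇑σ)) = _
  unfold dunkl
  have hperm_sub : ∀ u v : Uspin n d, permU σ (u - v) = permU σ u - permU σ v := by
    intro u v; funext a; simp [permU]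
  have hperm_smul : ∀ (c : ℂ) (v : Uspin n d), permU σ (c • v) = c • permU σ v := by
    intro c v; funext a; simp [permU]
  rw [hperm_sub, hperm_smul, hperm_smul]
  congr 1
  · rw [fderiv_shatP σ f x hfd i]
  · congr 1
    have hsum : ∀ (w : Fin n → Uspin n d) (s : Finset (Fin n)),
        permU σ (∑ j ∈ s, w j) = ∑ j ∈ s, permU σ (w j) := by
      intro w s; funext a; simp [permU, Finset.sum_apply]
    rw [hsum]
    refine Finset.sum_equiv σ (fun j => ?_) (fun j hj => ?_)
    · simp [EmbeddingLike.apply_eq_iff_eq]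
    · rw [permU_mulVec, ← shatP_swap_comp]
      simp [Equiv.Perm.inv_def, Equiv.symm_apply_apply]

end
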